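/- Let A and B be abelian von Neumann algebras and f : A → B a unital *-ring homomorphism, i.e., f(1) = 1, f(a*) = f(a)*, f(a+b) = f(a) + f(b), and f(ab) = f(a)f(b) for all a, b ∈ A. Then ‖f(a)‖ ≤ ‖a‖ for all a ∈ A, and f is the direct sum of a *-homomorphism and a conjugate *-homomorphism: there exist projections q₁, q₂ ∈ B with q₁ + q₂ = 1 such that a ↦ f(a)q₁ is a ℂ-linear *-homomorphism from A into Bq₁ and a ↦ f(a)q₂ is a conjugate-linear *-homomorphism from A into Bq₂. -/

import Mathlib

noncomputable section

namespace Stmt7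

set_option maxHeartbeats 1000000
set_option synthInstance.maxHeartbeats 400000

variable {H H' : Type*} [NormedAddCommGroup H] [InnerProductSpace ℂ H] [CompleteSpace H]
  [NormedAddCommGroup H'] [InnerProductSpace ℂ H'] [CompleteSpace H']

/-- A self-adjoint operator whose Loewner order is pinched between `l•1` and `u•1`,
with `[-r, r] ⊇ [l, u]`, has norm at most `r`. -/
lemma norm_le_of_between (x : H' →L[ℂ] H') (hx : IsSelfAdjoint x) {l u r : ℝ} (hr : 0 ≤ r)
    (hl : -r ≤ l) (hu : u ≤ r) (h1 : algebraMap ℝ _ l ≤ x)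
    (h2 : x ≤ algebraMap ℝ _ u) : ‖x‖ ≤ r := by
  have hs2 : ∀ s ∈ spectrum ℝ x, s ≤ u := (le_algebraMap_iff_spectrum_le (R := ℝ) (a := x) hx).mp h2
  have hs1 : ∀ s ∈ spectrum ℝ x, l ≤ s :=
    (algebraMap_le_iff_le_spectrum (R := ℝ) (a := x) hx).mp h1
  rw [← hx.toReal_spectralRadius_eq_norm]
  have : spectralRadius ℝ x ≤ ENNReal.ofReal r := by
    rw [spectralRadius]
    refine iSup₂_le fun k hk => ?_
    rw [← ENNReal.ofReal_coe_nnreal, coe_nnnorm]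
    refine ENNReal.ofReal_le_ofReal ?_
    rw [Real.norm_eq_abs]
    exact abs_le.mpr ⟨hl.trans (hs1 k hk), (hs2 k hk).trans hu⟩
  exact ENNReal.toReal_le_of_le_ofReal hr this

lemma isClosed_centralizer (S : Set (H →L[ℂ] H)) : IsClosed (Set.centralizer S) := by
  have : Set.centralizer S = ⋂ m ∈ S, {c : H →L[ℂ] H | m * c = c * m} := by
    ext c; simp [Set.mem_centralizer_iff]
  rw [this]
  exact isClosed_biInter fun m _ => isClosed_eq (continuous_mul_left m) (continuous_mul_right m)

lemma vn_isClosed (A : VonNeumannAlgebra H) : IsClosed (A : Set (H →L[ℂ] H)) := by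
  rw [← A.centralizer_centralizer]
  exact isClosed_centralizer _

/-- In a closed (hence C*) subalgebra, `r•1 - x` has a self-adjoint square root inside the
subalgebra, whenever `x` is self-adjoint with `‖x‖ ≤ r`. -/
lemma exists_sq_eq [Nontrivial H] (A : VonNeumannAlgebra H)
    {x : H →L[ℂ] H} (hx : x ∈ A) (hsa : IsSelfAdjoint x) {r : ℝ} (hr : ‖x‖ ≤ r) :
    ∃ b ∈ A, IsSelfAdjoint b ∧ b * b = algebraMap ℝ _ r - x := by
  set S := A.toStarSubalgebra with hS
  haveI : IsClosed (S : Set (H →L[ℂ] H)) := vn_isClosed A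
  haveI : NormOneClass S := ⟨by change ‖(1 : H →L[ℂ] H)‖ = 1; exact norm_one⟩
  set x' : S := ⟨x, hx⟩ with hx'
  have hsa' : IsSelfAdjoint x' := Subtype.ext hsa
  have hspec : ∀ t ∈ spectrum ℝ x', 0 ≤ r - t := by
    intro t ht
    have h1 := spectrum.norm_le_norm_of_mem ht
    have hnorm : ‖x'‖ = ‖x‖ := rfl
    rw [Real.norm_eq_abs] at h1
    have := (abs_le.mp (h1.trans (hnorm.le.trans hr))).2
    linarith
  set b' : S := cfc (fun t : ℝ => Real.sqrt (r - t)) x' with hb'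
  have hbsa : IsSelfAdjoint b' := cfc_predicate _ x'
  have hbb : b' * b' = algebraMap ℝ S r - x' := by
    rw [hb', ← cfc_mul _ _ x']
    have : cfc (fun t : ℝ => Real.sqrt (r - t) * Real.sqrt (r - t)) x'
        = cfc (fun t : ℝ => r - t) x' := by
      apply cfc_congr
      intro t ht
      exact Real.mul_self_sqrt (hspec t ht)
    rw [this, cfc_sub _ _ x', cfc_const _ x', cfc_id' ℝ x']
  refine ⟨(b' : H →L[ℂ] H), b'.2, ?_, ?_⟩
  · exact Subtype.ext_iff.mp hbsa
  · have := congrArg (Subtype.val) hbb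
    simpa [Algebra.algebraMap_eq_smul_one] using this

/-- Let `A` and `B` be abelian von Neumann algebras and `f : A → B` a
unital *-ring homomorphism. Then `‖f a‖ ≤ ‖a‖` for all `a ∈ A`, and `f` is the direct sum
of a ℂ-linear *-homomorphism and a conjugate-linear *-homomorphism: there are projections
`q₁, q₂ ∈ B` with `q₁ + q₂ = 1` such that `a ↦ f a * q₁` is a ℂ-linear *-homomorphism into
`B q₁` and `a ↦ f a * q₂` is a conjugate-linear *-homomorphism into `B q₂`. -/
theorem stmt7 (A : VonNeumannAlgebra H) (B : VonNeumannAlgebra H')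
    (hAab : ∀ x ∈ A, ∀ y ∈ A, x * y = y * x)
    (hBab : ∀ x ∈ B, ∀ y ∈ B, x * y = y * x)
    (f : (H →L[ℂ] H) → (H' →L[ℂ] H'))
    (hmaps : ∀ a ∈ A, f a ∈ B)
    (hone : f 1 = 1)
    (hstar : ∀ a ∈ A, f (star a) = star (f a))
    (hadd : ∀ a ∈ A, ∀ b ∈ A, f (a + b) = f a + f b)
    (hmul : ∀ a ∈ A, ∀ b ∈ A, f (a * b) = f a * f b) :
    (∀ a ∈ A, ‖f a‖ ≤ ‖a‖) ∧
    ∃ q₁ q₂ : H' →L[ℂ] H', q₁ ∈ B ∧ q₂ ∈ B ∧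
      q₁ * q₁ = q₁ ∧ star q₁ = q₁ ∧ q₂ * q₂ = q₂ ∧ star q₂ = q₂ ∧ q₁ + q₂ = 1 ∧
      (∀ (c : ℂ), ∀ a ∈ A, f (c • a) * q₁ = c • (f a * q₁)) ∧
      (∀ a ∈ A, ∀ b ∈ A, f (a + b) * q₁ = f a * q₁ + f b * q₁ ∧
        f (a * b) * q₁ = (f a * q₁) * (f b * q₁)) ∧
      (∀ a ∈ A, f (star a) * q₁ = star (f a * q₁)) ∧
      (∀ (c : ℂ), ∀ a ∈ A, f (c • a) * q₂ = (starRingEnd ℂ c) • (f a * q₂)) ∧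
      (∀ a ∈ A, ∀ b ∈ A, f (a + b) * q₂ = f a * q₂ + f b * q₂ ∧
        f (a * b) * q₂ = (f a * q₂) * (f b * q₂)) ∧
      (∀ a ∈ A, f (star a) * q₂ = star (f a * q₂)) := by
  classical
  -- membership helpers
  have hmemA : ∀ (c : ℂ), (c • (1 : H →L[ℂ] H)) ∈ A := fun c =>
    A.toStarSubalgebra.smul_mem (one_mem A) c
  have hsmulA : ∀ (c : ℂ) {x : H →L[ℂ] H}, x ∈ A → c • x ∈ A := fun c x hx =>
    A.toStarSubalgebra.smul_mem hx c
  have hsmulB : ∀ (c : ℂ) {x : H' →L[ℂ] H'}, x ∈ B → c • x ∈ B := fun c x hx =>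
    B.toStarSubalgebra.smul_mem hx c
  -- basic additive facts
  have h0 : f 0 = 0 := by
    have h := hadd 0 (zero_mem A) 0 (zero_mem A)
    simp only [add_zero] at h
    exact (left_eq_add.mp h)
  have hneg : ∀ a ∈ A, f (-a) = - f a := by
    intro a ha
    have h := hadd a ha (-a) (neg_mem ha)
    simp only [add_neg_cancel, h0] at h
    linear_combination (norm := abel) -h
  have hsub : ∀ a ∈ A, ∀ b ∈ A, f (a - b) = f a - f b := by
    intro a ha b hb
    rw [sub_eq_add_neg, hadd a ha (-b) (neg_mem hb), hneg b hb, sub_eq_add_neg]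
  -- algebraMap identifications
  have halgM : ∀ t : ℝ, algebraMap ℝ (H →L[ℂ] H) t = (t : ℂ) • 1 := by
    intro t
    rw [IsScalarTower.algebraMap_apply ℝ ℂ (H →L[ℂ] H), Algebra.algebraMap_eq_smul_one]
    norm_num
  have halgN : ∀ t : ℝ, algebraMap ℝ (H' →L[ℂ] H') t = (t : ℂ) • 1 := by
    intro t
    rw [IsScalarTower.algebraMap_apply ℝ ℂ (H' →L[ℂ] H'), Algebra.algebraMap_eq_smul_one]
    norm_num
  -- star of scalars
  have hstarsmul1A : ∀ c : ℂ, star (c • (1 : H →L[ℂ] H)) = (starRingEnd ℂ c) • 1 := by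
    intro c; rw [star_smul, star_one]; rfl
  -- f on natural multiples
  have hfnat : ∀ (n : ℕ), ∀ a ∈ A, f ((n : ℂ) • a) = (n : ℂ) • f a := by
    intro n
    induction n with
    | zero => intro a _; simp [h0]
    | succ n ih =>
      intro a ha
      have hd : ((n + 1 : ℕ) : ℂ) • a = (n : ℂ) • a + a := by
        push_cast; rw [add_smul, one_smul]
      rw [hd, hadd _ (hsmulA _ ha) a ha, ih a ha]
      push_cast; rw [add_smul, one_smul]
  -- γ t := f ((t:ℂ) • 1) ; first on ℚ
  have hγnat : ∀ n : ℕ, f ((n : ℂ) • (1 : H →L[ℂ] H)) = (n : ℂ) • 1 := by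
    intro n; rw [hfnat n 1 (one_mem A), hone]
  have hγint : ∀ n : ℤ, f ((n : ℂ) • (1 : H →L[ℂ] H)) = (n : ℂ) • 1 := by
    intro n
    rcases n with m | m
    · rw [Int.ofNat_eq_coe]; exact_mod_cast hγnat m
    · have : ((Int.negSucc m : ℤ) : ℂ) • (1 : H →L[ℂ] H)
          = -(((m + 1 : ℕ) : ℂ) • 1) := by push_cast; rw [neg_smul]
      rw [this, hneg _ (hsmulA _ (one_mem A)), hγnat]
      push_cast; rw [neg_smul]
  have hγrat : ∀ q : ℚ, f ((q : ℂ) • (1 : H →L[ℂ] H)) = (q : ℂ) • 1 := by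
    intro q
    have hden : ((q.den : ℂ)) ≠ 0 := by
      exact_mod_cast Nat.cast_ne_zero.mpr q.den_nz
    have hkey : ((q.den : ℂ)) * (q : ℂ) = ((q.num : ℂ)) := by
      rw [Rat.cast_def]; field_simp
    have h1 : f (((q.den : ℂ)) • ((q : ℂ) • (1 : H →L[ℂ] H)))
        = ((q.den : ℂ)) • f ((q : ℂ) • (1 : H →L[ℂ] H)) :=
      hfnat q.den _ (hsmulA _ (one_mem A))
    rw [smul_smul, hkey, hγint q.num] at h1
    have h2 : ((q.num : ℂ)) • (1 : H' →L[ℂ] H') = ((q.den : ℂ)) • ((q : ℂ) • 1) := by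
      rw [smul_smul, hkey]
    rw [h2] at h1
    exact (smul_right_injective _ hden h1.symm)
  -- γ is self-adjoint for real t
  have hγsa : ∀ t : ℝ, IsSelfAdjoint (f ((t : ℂ) • (1 : H →L[ℂ] H))) := by
    intro t
    have h := hstar _ (hmemA (t : ℂ))
    rw [hstarsmul1A] at h
    have : (starRingEnd ℂ (t : ℂ)) = (t : ℂ) := Complex.conj_ofReal t
    rw [this] at h
    exact Eq.symm h
  -- positivity of γ on nonnegative reals
  have hγpos : ∀ t : ℝ, 0 ≤ t → (0 : H' →L[ℂ] H') ≤ f ((t : ℂ) • 1) := by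
    intro t ht
    set c : H →L[ℂ] H := ((Real.sqrt t : ℂ)) • 1 with hc
    have hcA : c ∈ A := hmemA _
    have hstarc : star c = c := by
      rw [hc, hstarsmul1A, Complex.conj_ofReal]
    have hcc : star c * c = (t : ℂ) • (1 : H →L[ℂ] H) := by
      rw [hstarc, hc, smul_mul_smul_comm, one_mul, ← Complex.ofReal_mul,
        Real.mul_self_sqrt ht]
    have : f ((t : ℂ) • (1 : H →L[ℂ] H)) = star (f c) * f c := by
      rw [← hcc, hmul _ (star_mem hcA) _ hcA, hstar _ hcA]
    rw [this]
    exact star_mul_self_nonneg (f c)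
  -- the key real-linearity on 1
  have hγ : ∀ t : ℝ, f ((t : ℂ) • (1 : H →L[ℂ] H)) = (t : ℂ) • 1 := by
    intro t
    set y : H' →L[ℂ] H' := f ((t : ℂ) • 1) - (t : ℂ) • 1 with hy
    have hysa : IsSelfAdjoint y := by
      refine (hγsa t).sub ?_
      rw [IsSelfAdjoint, star_smul, star_one, RCLike.star_def, Complex.conj_ofReal]
    have hbound : ∀ ε : ℝ, 0 < ε → ‖y‖ ≤ ε := by
      intro ε hε
      obtain ⟨q, hq1, hq2⟩ := exists_rat_btwn (sub_lt_self t hε)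
      obtain ⟨q', hq1', hq2'⟩ := exists_rat_btwn (lt_add_of_pos_right t hε)
      have hlow : algebraMap ℝ (H' →L[ℂ] H') ((q : ℝ) - t) ≤ y := by
        have h1 : (0 : H' →L[ℂ] H') ≤ f (((t - (q : ℝ) : ℝ) : ℂ) • 1) :=
          hγpos _ (by linarith)
        have h2 : (((t - (q : ℝ) : ℝ)) : ℂ) • (1 : H →L[ℂ] H)
            = (t : ℂ) • 1 - ((q : ℚ) : ℂ) • 1 := by push_cast; rw [sub_smul]
        rw [h2, hsub _ (hmemA _) _ (hmemA _), hγrat] at h1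
        rw [← sub_nonneg]
        convert h1 using 1
        rw [hy, halgN]
        push_cast
        rw [sub_smul]
        abel
      have hhigh : y ≤ algebraMap ℝ (H' →L[ℂ] H') ((q' : ℝ) - t) := by
        have h1 : (0 : H' →L[ℂ] H') ≤ f ((((q' : ℝ) - t : ℝ) : ℂ) • 1) :=
          hγpos _ (by linarith)
        have h2 : ((((q' : ℝ) - t : ℝ)) : ℂ) • (1 : H →L[ℂ] H)
            = ((q' : ℚ) : ℂ) • 1 - (t : ℂ) • 1 := by push_cast; rw [sub_smul]
        rw [h2, hsub _ (hmemA _) _ (hmemA _), hγrat] at h1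
        rw [← sub_nonneg]
        convert h1 using 1
        rw [hy, halgN]
        push_cast
        rw [sub_smul]
        abel
      exact norm_le_of_between y hysa hε.le (by linarith) (by linarith) hlow hhigh
    have : ‖y‖ ≤ 0 := le_of_forall_gt_imp_ge_of_dense (by
      intro ε hε
      exact hbound ε hε)
    have hynorm : ‖y‖ = 0 := le_antisymm this (norm_nonneg y)
    have : y = 0 := norm_eq_zero.mp hynorm
    rw [hy] at this
    exact sub_eq_zero.mp this
  -- full real linearity
  have hreal : ∀ (t : ℝ), ∀ a ∈ A, f ((t : ℂ) • a) = (t : ℂ) • f a := by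
    intro t a ha
    have h1 : (t : ℂ) • a = ((t : ℂ) • (1 : H →L[ℂ] H)) * a := by
      rw [smul_mul_assoc, one_mul]
    rw [h1, hmul _ (hmemA _) a ha, hγ t, smul_mul_assoc, one_mul]
  rcases subsingleton_or_nontrivial (H →L[ℂ] H) with hM | hM
  · -- the degenerate case: everything is zero
    have h10 : (1 : H' →L[ℂ] H') = 0 := by
      rw [← hone, Subsingleton.elim (1 : H →L[ℂ] H) 0, h0]
    haveI hNs : Subsingleton (H' →L[ℂ] H') := by
      refine subsingleton_of_forall_eq 0 fun x => ?_
      calc x = x * 1 := (mul_one x).symm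
        _ = x * 0 := by rw [h10]
        _ = 0 := mul_zero x
    refine ⟨fun a _ => ?_, 1, 0, one_mem B, zero_mem B, Subsingleton.elim _ _,
      Subsingleton.elim _ _, Subsingleton.elim _ _, Subsingleton.elim _ _,
      Subsingleton.elim _ _, fun c a _ => Subsingleton.elim _ _,
      fun a _ b _ => ⟨Subsingleton.elim _ _, Subsingleton.elim _ _⟩,
      fun a _ => Subsingleton.elim _ _, fun c a _ => Subsingleton.elim _ _,
      fun a _ b _ => ⟨Subsingleton.elim _ _, Subsingleton.elim _ _⟩,
      fun a _ => Subsingleton.elim _ _⟩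
    have : f a = 0 := Subsingleton.elim _ _
    rw [this, norm_zero]
    exact norm_nonneg a
  · haveI hHnt : Nontrivial H := by
      by_contra hcon
      rw [not_nontrivial_iff_subsingleton] at hcon
      haveI : Subsingleton (H →L[ℂ] H) :=
        ⟨fun a b => by ext x; exact Subsingleton.elim _ _⟩
      exact false_of_nontrivial_of_subsingleton (H →L[ℂ] H)
    -- self-adjointness transfers
    have hfsa : ∀ a ∈ A, IsSelfAdjoint a → IsSelfAdjoint (f a) := by
      intro a ha hsa
      have h := hstar a ha
      rw [hsa.star_eq] at h
      exact Eq.symm h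
    have hpos' : ∀ c ∈ A, (0 : H' →L[ℂ] H') ≤ f (star c * c) := by
      intro c hc
      rw [hmul _ (star_mem hc) _ hc, hstar _ hc]
      exact star_mul_self_nonneg _
    -- norm bound for self-adjoint elements
    have hnorm_sa : ∀ a ∈ A, IsSelfAdjoint a → ‖f a‖ ≤ ‖a‖ := by
      intro a ha hsa
      obtain ⟨b, hbA, hbsa, hbb⟩ := exists_sq_eq A ha hsa (le_refl ‖a‖)
      obtain ⟨c, hcA, hcsa, hcc⟩ :=
        exists_sq_eq A (neg_mem ha) hsa.neg (by rw [norm_neg])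
      have heq : ∀ x ∈ A, f (algebraMap ℝ (H →L[ℂ] H) ‖a‖ - x)
          = algebraMap ℝ (H' →L[ℂ] H') ‖a‖ - f x := by
        intro x hx
        rw [halgM, hsub _ (hmemA _) x hx, hγ, halgN]
      have hb' : (0 : H' →L[ℂ] H') ≤ algebraMap ℝ (H' →L[ℂ] H') ‖a‖ - f a := by
        have h1 : b * b = star b * b := by rw [hbsa.star_eq]
        have h2 := hpos' b hbA
        rw [← h1, hbb, heq a ha] at h2
        exact h2
      have hc' : (0 : H' →L[ℂ] H') ≤ algebraMap ℝ (H' →L[ℂ] H') ‖a‖ + f a := by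
        have h1 : c * c = star c * c := by rw [hcsa.star_eq]
        have h2 := hpos' c hcA
        rw [← h1, hcc, heq _ (neg_mem ha), hneg a ha, sub_neg_eq_add] at h2
        exact h2
      have hhigh : f a ≤ algebraMap ℝ (H' →L[ℂ] H') ‖a‖ := sub_nonneg.mp hb'
      have hlow : algebraMap ℝ (H' →L[ℂ] H') (-‖a‖) ≤ f a := by
        rw [map_neg]
        rw [neg_le_iff_add_nonneg, add_comm]
        exact hc'
      exact norm_le_of_between (f a) (hfsa a ha hsa) (norm_nonneg a)
        (le_refl _) (le_refl _) hlow hhigh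
    have hnorm : ∀ a ∈ A, ‖f a‖ ≤ ‖a‖ := by
      intro a ha
      have h1 : ‖f a‖ * ‖f a‖ = ‖f (star a * a)‖ := by
        rw [hmul _ (star_mem ha) a ha, hstar a ha, CStarRing.norm_star_mul_self]
      have hsaa : IsSelfAdjoint (star a * a) := by
        rw [IsSelfAdjoint, star_mul, star_star]
      have h2 : ‖f (star a * a)‖ ≤ ‖star a * a‖ :=
        hnorm_sa _ (mul_mem (star_mem ha) ha) hsaa
      have h3 : ‖star a * a‖ = ‖a‖ * ‖a‖ := CStarRing.norm_star_mul_self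
      nlinarith [norm_nonneg (f a), norm_nonneg a]
    refine ⟨hnorm, ?_⟩
    -- the imaginary unit in B
    set u := f (Complex.I • 1) with hu
    have huA : Complex.I • (1 : H →L[ℂ] H) ∈ A := hmemA _
    have huB : u ∈ B := hmaps _ huA
    have hu2 : u * u = -1 := by
      rw [hu, ← hmul _ huA _ huA, smul_mul_smul_comm, one_mul, Complex.I_mul_I,
        neg_smul, one_smul, hneg _ (one_mem A), hone]
    have hustar : star u = -u := by
      have h := hstar _ huA
      rw [hstarsmul1A, Complex.conj_I, neg_smul, hneg _ huA] at h
      rw [← h, hu]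
    set v := Complex.I • u with hv
    have hvB : v ∈ B := hsmulB _ huB
    have hv2 : v * v = 1 := by
      rw [hv, smul_mul_smul_comm, hu2, Complex.I_mul_I]
      simp
    have hvstar : star v = v := by
      rw [hv, star_smul, RCLike.star_def, Complex.conj_I, hustar]
      simp
    set q₁ := (2⁻¹ : ℂ) • ((1 : H' →L[ℂ] H') - v) with hq₁
    set q₂ := (2⁻¹ : ℂ) • ((1 : H' →L[ℂ] H') + v) with hq₂
    have hq₁B : q₁ ∈ B := hsmulB _ (sub_mem (one_mem B) hvB)
    have hq₂B : q₂ ∈ B := hsmulB _ (add_mem (one_mem B) hvB)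
    have hq₁proj : q₁ * q₁ = q₁ := by
      rw [hq₁, smul_mul_smul_comm]
      have hexp : ((1 : H' →L[ℂ] H') - v) * (1 - v) = (2 : ℂ) • (1 - v) := by
        simp only [sub_mul, mul_sub, one_mul, mul_one, hv2]
        rw [two_smul]
        abel
      rw [hexp, smul_smul]
      norm_num
    have hq₂proj : q₂ * q₂ = q₂ := by
      rw [hq₂, smul_mul_smul_comm]
      have hexp : ((1 : H' →L[ℂ] H') + v) * (1 + v) = (2 : ℂ) • (1 + v) := by
        simp only [add_mul, mul_add, one_mul, mul_one, hv2]
        rw [two_smul]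
        abel
      rw [hexp, smul_smul]
      norm_num
    have hq₁star : star q₁ = q₁ := by
      rw [hq₁, star_smul, star_sub, star_one, hvstar]
      congr 1
      simp
    have hq₂star : star q₂ = q₂ := by
      rw [hq₂, star_smul, star_add, star_one, hvstar]
      congr 1
      simp
    have hsum : q₁ + q₂ = 1 := by
      rw [hq₁, hq₂]
      module
    have huq₁ : u * q₁ = Complex.I • q₁ := by
      rw [hq₁, hv, mul_smul_comm, mul_sub, mul_one, mul_smul_comm, hu2]
      match_scalars <;> simp [Complex.ext_iff]
    have huq₂ : u * q₂ = (-Complex.I) • q₂ := by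
      rw [hq₂, hv, mul_smul_comm, mul_add, mul_one, mul_smul_comm, hu2]
      match_scalars <;> simp [Complex.ext_iff]
    -- scalar decomposition of f
    have hdecomp : ∀ (c : ℂ), ∀ a ∈ A,
        f (c • a) = (c.re : ℂ) • f a + (c.im : ℂ) • (u * f a) := by
      intro c a ha
      have hsplit : c • a = (c.re : ℂ) • a + (c.im : ℂ) • (Complex.I • a) := by
        conv_lhs => rw [← Complex.re_add_im c]
        rw [add_smul, mul_smul]
      have hIa : f (Complex.I • a) = u * f a := by
        have h1 : Complex.I • a = (Complex.I • (1 : H →L[ℂ] H)) * a := by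
          rw [smul_mul_assoc, one_mul]
        rw [h1, hmul _ huA a ha, hu]
      rw [hsplit, hadd _ (hsmulA _ ha) _ (hsmulA _ (hsmulA _ ha)),
        hreal c.re a ha, hreal c.im _ (hsmulA _ ha), hIa]
    -- projections intertwine
    have hmulq : ∀ (q : H' →L[ℂ] H'), q ∈ B → q * q = q →
        ∀ a ∈ A, ∀ b ∈ A, f (a * b) * q = (f a * q) * (f b * q) := by
      intro q hqB hqq a ha b hb
      rw [hmul a ha b hb]
      have h1 : q * (f b * q) = f b * q := by
        rw [← mul_assoc, hBab q hqB (f b) (hmaps b hb), mul_assoc, hqq]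
      rw [mul_assoc (f a) q (f b * q), h1, ← mul_assoc]
    have hstarq : ∀ (q : H' →L[ℂ] H'), q ∈ B → star q = q →
        ∀ a ∈ A, f (star a) * q = star (f a * q) := by
      intro q hqB hqs a ha
      rw [hstar a ha, star_mul, hqs]
      exact (hBab q hqB _ (star_mem (hmaps a ha))).symm
    have hscal : ∀ (q : H' →L[ℂ] H'), q ∈ B → ∀ (w : ℂ), u * q = w • q →
        ∀ (c : ℂ), ∀ a ∈ A, f (c • a) * q = ((c.re : ℂ) + (c.im : ℂ) * w) • (f a * q) := by
      intro q hqB w hw c a ha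
      rw [hdecomp c a ha, add_mul, smul_mul_assoc, smul_mul_assoc]
      have h1 : u * f a * q = w • (f a * q) := by
        rw [hBab u huB (f a) (hmaps a ha), mul_assoc, hw, mul_smul_comm]
      rw [h1, smul_smul, add_smul]
    refine ⟨q₁, q₂, hq₁B, hq₂B, hq₁proj, hq₁star, hq₂proj, hq₂star, hsum,
      ?_, fun a ha b hb => ⟨by rw [hadd a ha b hb, add_mul], hmulq q₁ hq₁B hq₁proj a ha b hb⟩,
      hstarq q₁ hq₁B hq₁star,
      ?_, fun a ha b hb => ⟨by rw [hadd a ha b hb, add_mul], hmulq q₂ hq₂B hq₂proj a ha b hb⟩,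
      hstarq q₂ hq₂B hq₂star⟩
    · intro c a ha
      rw [hscal q₁ hq₁B Complex.I huq₁ c a ha]
      congr 1
      exact Complex.re_add_im c
    · intro c a ha
      rw [hscal q₂ hq₂B (-Complex.I) huq₂ c a ha]
      congr 1
      simp [Complex.ext_iff]

end Stmt7
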